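/- Fix n, p, T, a positive definite Σ, B* ∈ ℝ^{p×T}, E ∈ ℝ^{n×T}, λ ≥ 0, τ = 0, and constants c ∈ (0,1), η > 0. For Z ∈ ℝ^{n×p} let X = ZΣ^{1/2}, Y = XB* + E, B̂(Z) the multi-task group Lasso solution, H(Z) = Σ^{1/2}(B̂(Z) − B*), F(Z) = Y − XB̂(Z), and D(Z) = (‖H(Z)‖_F² + ‖F(Z)‖_F²/n)^{1/2} > 0. Let Z, Z̄ be such that both B̂(Z) and B̂(Z̄) have at most n(1−c)/2 nonzero rows, and both X = ZΣ^{1/2} and X̄ = Z̄Σ^{1/2} satisfy ‖Xb‖² > η n ‖Σ^{1/2}b‖² for every nonzero b ∈ ℝ^p with at most (1−c)n nonzero entries. Then: (1) (1/√n)‖F(Z)/D(Z) − F(Z̄)/D(Z̄)‖_F ≤ n^{−1/2}·L·‖Z − Z̄‖_op with L = 8 max(1,(2η)^{−1}); and (2) if additionally ‖Z‖_op < 2√n + √p and ‖Z̄‖_op < 2√n + √p, then ‖(1/n)ZᵀF(Z)/D(Z) − (1/n)Z̄ᵀF(Z̄)/D(Z̄)‖_op ≤ n^{−1/2}·(1 +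 (2 + √(p/n))·L)·‖Z − Z̄‖_op. -/

import Mathlib

open MeasureTheory ProbabilityTheory Matrix Filter
open scoped BigOperators Kronecker NNReal ENNReal

noncomputable section

namespace MTS

instance matMeasurableSpace {a b : Type*} : MeasurableSpace (Matrix a b ℝ) :=
  inferInstanceAs (MeasurableSpace (a → b → ℝ))

instance matNormedAddCommGroup {a b : Type*} [Fintype a] [Fintype b] :
    NormedAddCommGroup (Matrix a b ℝ) :=
  inferInstanceAs (NormedAddCommGroup (a → b → ℝ))

instance matNormedSpace {a b : Type*} [Fintype a] [Fintype b] :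
    NormedSpace ℝ (Matrix a b ℝ) :=
  inferInstanceAs (NormedSpace ℝ (a → b → ℝ))

instance matMeasureSpace {a b : Type*} [Fintype a] [Fintype b] :
    MeasureSpace (Matrix a b ℝ) :=
  inferInstanceAs (MeasureSpace (a → b → ℝ))

/-- Squared Frobenius norm of a matrix. -/
def frobSq {a b : Type*} [Fintype a] [Fintype b] (A : Matrix a b ℝ) : ℝ :=
  ∑ i, ∑ j, A i j ^ 2

/-- Frobenius norm of a matrix. -/
def frob {a b : Type*} [Fintype a] [Fintype b] (A : Matrix a b ℝ) : ℝ :=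
  Real.sqrt (frobSq A)

/-- ℓ2-operator norm of a matrix. -/
def opNorm {a b : Type*} [Fintype a] [Fintype b] [DecidableEq b] (A : Matrix a b ℝ) : ℝ :=
  ‖LinearMap.toContinuousLinearMap (Matrix.toEuclideanLin A)‖

open Classical in
def matSqrt {p : ℕ} (A : Matrix (Fin p) (Fin p) ℝ) : Matrix (Fin p) (Fin p) ℝ :=
  if h : A.PosSemidef then
    (h.1.eigenvectorUnitary : Matrix (Fin p) (Fin p) ℝ) * Matrix.diagonal (Real.sqrt ∘ h.1.eigenvalues) *
      (star h.1.eigenvectorUnitary : Matrix (Fin p) (Fin p) ℝ) else 0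

/-- Nuclear norm of a square matrix. -/
def nucNorm {T : ℕ} (A : Matrix (Fin T) (Fin T) ℝ) : ℝ :=
  (matSqrt (Aᵀ * A)).trace

open Classical in
def pinv {N : Type*} [Fintype N] [DecidableEq N] (M : Matrix N N ℝ) : Matrix N N ℝ :=
  if h : ∃ G : Matrix N N ℝ,
      M * G * M = M ∧ G * M * G = G ∧ (M * G)ᵀ = M * G ∧ (G * M)ᵀ = G * M
  then h.choose else 0

/-- The ℓ_{2,1} norm of a matrix: sum of the Euclidean norms of its rows. -/
def norm21 {p T : ℕ} (B : Matrix (Fin p) (Fin T) ℝ) : ℝ :=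
  ∑ j, Real.sqrt (∑ t, B j t ^ 2)

/-- The multi-task elastic-net objective function. -/
def objective {p T : ℕ} (n : ℕ) (lam tau : ℝ) (Y : Matrix (Fin n) (Fin T) ℝ)
    (X : Matrix (Fin n) (Fin p) ℝ) (B : Matrix (Fin p) (Fin T) ℝ) : ℝ :=
  (1 / (2 * (n : ℝ))) * frobSq (Y - X * B) + lam * norm21 B + (tau / 2) * frobSq B

open Classical in
def nnzRows {p T : ℕ} (B : Matrix (Fin p) (Fin T) ℝ) : ℕ :=
  (Finset.univ.filter fun j => B j ≠ 0).card

open Classical in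
def nnzVec {p : ℕ} (b : Fin p → ℝ) : ℕ :=
  (Finset.univ.filter fun j => b j ≠ 0).card

open Classical in
def rowHess {T : ℕ} (lam : ℝ) (r : Fin T → ℝ) : Matrix (Fin T) (Fin T) ℝ :=
  if r = 0 then 0
  else (lam * (Real.sqrt (∑ t, r t ^ 2))⁻¹) •
    ((1 : Matrix (Fin T) (Fin T) ℝ) - (∑ t, r t ^ 2)⁻¹ • Matrix.vecMulVec r r)

open Classical in
def Psupp {p T : ℕ} (B : Matrix (Fin p) (Fin T) ℝ) : Matrix (Fin p) (Fin p) ℝ :=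
  Matrix.of fun j k => if j = k ∧ B j ≠ 0 then (1 : ℝ) else 0

open Classical in
def Xsupp {n p T : ℕ} (X : Matrix (Fin n) (Fin p) ℝ) (B : Matrix (Fin p) (Fin T) ℝ) :
    Matrix (Fin n) (Fin p) ℝ :=
  Matrix.of fun i j => if B j ≠ 0 then X i j else 0

/-- The matrix `M = I_T ⊗ (X_ŜᵀX_Ŝ + τ n P_Ŝ) + n Σ_{k ∈ Ŝ} (H^{(k)} ⊗ e_k e_kᵀ)`. -/
def Mmat {p T : ℕ} (n : ℕ) (lam tau : ℝ) (X : Matrix (Fin n) (Fin p) ℝ)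
    (B : Matrix (Fin p) (Fin T) ℝ) : Matrix (Fin T × Fin p) (Fin T × Fin p) ℝ :=
  (1 : Matrix (Fin T) (Fin T) ℝ) ⊗ₖ ((Xsupp X B)ᵀ * Xsupp X B + (tau * n) • Psupp B)
    + (n : ℝ) • ∑ k : Fin p, (rowHess lam (B k)) ⊗ₖ (Matrix.single k k (1 : ℝ))

/-- The interaction matrix `Â = Σ_i (I_T ⊗ e_iᵀX) M† (I_T ⊗ Xᵀe_i)`, written entrywise:
`Â_{t,t'} = Σ_i Σ_j Σ_j' X_{ij} (M†)_{(t,j),(t',j')} X_{ij'}`. -/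
def Amat {p T : ℕ} (n : ℕ) (lam tau : ℝ) (X : Matrix (Fin n) (Fin p) ℝ)
    (B : Matrix (Fin p) (Fin T) ℝ) : Matrix (Fin T) (Fin T) ℝ :=
  Matrix.of fun t t' => ∑ i : Fin n, ∑ j : Fin p, ∑ j' : Fin p,
    X i j * pinv (Mmat n lam tau X B) (t, j) (t', j') * X i j'

/-- The proposed noise covariance estimator `Ŝ`. -/
def Scov {p T : ℕ} (n : ℕ) (lam tau : ℝ) (Sig : Matrix (Fin p) (Fin p) ℝ)
    (X : Matrix (Fin n) (Fin p) ℝ) (Y : Matrix (Fin n) (Fin T) ℝ)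
    (B : Matrix (Fin p) (Fin T) ℝ) : Matrix (Fin T) (Fin T) ℝ :=
  ((n : ℝ) • (1 : Matrix (Fin T) (Fin T) ℝ) - Amat n lam tau X B)⁻¹ *
    ((Y - X * B)ᵀ * ((((p : ℝ) + (n : ℝ)) • (1 : Matrix (Fin n) (Fin n) ℝ))
        - X * Sig⁻¹ * Xᵀ) * (Y - X * B)
      - Amat n lam tau X B * ((Y - X * B)ᵀ * (Y - X * B))
      - ((Y - X * B)ᵀ * (Y - X * B)) * Amat n lam tau X B) *
    ((n : ℝ) • (1 : Matrix (Fin T) (Fin T) ℝ) - Amat n lam tau X B)⁻¹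

/-- A random vector is centered Gaussian with covariance `S`: every linear functional of it
is a centered real Gaussian with the corresponding variance. -/
def IsGaussianVec {Ω : Type*} [MeasurableSpace Ω] (P : Measure Ω) {T : ℕ}
    (v : Ω → Fin T → ℝ) (S : Matrix (Fin T) (Fin T) ℝ) : Prop :=
  ∀ a : Fin T → ℝ,
    Measure.map (fun ω => ∑ t, a t * v ω t) P =
      gaussianReal 0 (Real.toNNReal (a ⬝ᵥ S.mulVec a))

/-- The rows of the random matrix `M` are i.i.d. centered Gaussian vectors with
covariance `S`. -/
def IIDGaussianRows {Ω : Type*} [MeasurableSpace Ω] (P : Measure Ω) {n T : ℕ}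
    (M : Ω → Matrix (Fin n) (Fin T) ℝ) (S : Matrix (Fin T) (Fin T) ℝ) : Prop :=
  (∀ i j, Measurable fun ω => M ω i j) ∧
    iIndepFun (fun i ω => M ω i) P ∧
    ∀ i, IsGaussianVec P (fun ω => M ω i) S

/-- All the assumptions of the multi-task linear model with multi-task elastic-net
estimator `Bhat`. -/
structure ModelHyps {n p T : ℕ} {Ω : Type*} [MeasurableSpace Ω] (P : Measure Ω)
    (Sig : Matrix (Fin p) (Fin p) ℝ) (S : Matrix (Fin T) (Fin T) ℝ)
    (Bstar : Matrix (Fin p) (Fin T) ℝ)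
    (X : Ω → Matrix (Fin n) (Fin p) ℝ) (E : Ω → Matrix (Fin n) (Fin T) ℝ)
    (lam tau : ℝ) (Bhat : Ω → Matrix (Fin p) (Fin T) ℝ) : Prop where
  prob : IsProbabilityMeasure P
  hn : 0 < n
  hp : 0 < p
  hT : 0 < T
  hSig : Sig.PosDef
  hS : S.PosSemidef
  hX : IIDGaussianRows P X Sig
  hE : IIDGaussianRows P E S
  indep : IndepFun X E P
  hlam : 0 ≤ lam
  htau : 0 ≤ tau
  hBhat_meas : Measurable Bhat
  hBhat_min : ∀ ω B, objective n lam tau (X ω * Bstar + E ω) (X ω) (Bhat ω)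
      ≤ objective n lam tau (X ω * Bstar + E ω) (X ω) B

/-- The event `U₁` that `B̂` has at most `n(1-c)/2` nonzero rows. -/
def U1set {p T : ℕ} {Ω : Type*} (Bhat : Ω → Matrix (Fin p) (Fin T) ℝ) (n : ℕ) (c : ℝ) :
    Set Ω :=
  {ω | (nnzRows (Bhat ω) : ℝ) ≤ (n : ℝ) * (1 - c) / 2}

/-- Smallest eigenvalue of a symmetric matrix (junk value `0` otherwise). -/
def eigMin {p : ℕ} (A : Matrix (Fin p) (Fin p) ℝ) : ℝ :=
  if h : A.IsHermitian then ⨅ i, h.eigenvalues i else 0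


/-- Residual matrix `F = Y - XB` with `Y = XB* + E`. -/
def resid {n p T : ℕ} (Bstar : Matrix (Fin p) (Fin T) ℝ) (X : Matrix (Fin n) (Fin p) ℝ)
    (E : Matrix (Fin n) (Fin T) ℝ) (B : Matrix (Fin p) (Fin T) ℝ) :
    Matrix (Fin n) (Fin T) ℝ :=
  X * Bstar + E - X * B

/-- Error matrix `H = Σ^{1/2}(B - B*)`. -/
def herr {p T : ℕ} (Sig : Matrix (Fin p) (Fin p) ℝ) (Bstar B : Matrix (Fin p) (Fin T) ℝ) :
    Matrix (Fin p) (Fin T) ℝ :=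
  matSqrt Sig * (B - Bstar)

/-- The matrix `I_T - Â/n`. -/
def ImA {p T : ℕ} (n : ℕ) (lam tau : ℝ) (X : Matrix (Fin n) (Fin p) ℝ)
    (B : Matrix (Fin p) (Fin T) ℝ) : Matrix (Fin T) (Fin T) ℝ :=
  (1 : Matrix (Fin T) (Fin T) ℝ) - (n : ℝ)⁻¹ • Amat n lam tau X B

/-- Residual as a function of `Z`, where `X = ZΣ^{1/2}` and `Y = XB* + E`. -/
def Fz {n p T : ℕ} (Sig : Matrix (Fin p) (Fin p) ℝ) (Bstar : Matrix (Fin p) (Fin T) ℝ)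
    (E : Matrix (Fin n) (Fin T) ℝ) (Z : Matrix (Fin n) (Fin p) ℝ)
    (B : Matrix (Fin p) (Fin T) ℝ) : Matrix (Fin n) (Fin T) ℝ :=
  Z * matSqrt Sig * Bstar + E - Z * matSqrt Sig * B

/-- `D(Z) = (‖H(Z)‖_F² + ‖F(Z)‖_F²/n)^{1/2}`. -/
def Dz {n p T : ℕ} (Sig : Matrix (Fin p) (Fin p) ℝ) (Bstar : Matrix (Fin p) (Fin T) ℝ)
    (E : Matrix (Fin n) (Fin T) ℝ) (Z : Matrix (Fin n) (Fin p) ℝ)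
    (B : Matrix (Fin p) (Fin T) ℝ) : ℝ :=
  Real.sqrt (frob (herr Sig Bstar B) ^ 2 + frob (Fz Sig Bstar E Z B) ^ 2 / (n : ℝ))

/-- The distribution of an `n × p` random matrix with i.i.d. standard Gaussian entries. -/
def stdGaussMat (n p : ℕ) : Measure (Matrix (Fin n) (Fin p) ℝ) :=
  Measure.pi fun _ : Fin n => Measure.pi fun _ : Fin p => gaussianReal 0 1

/-- The method-of-moments estimator of the noise covariance. -/
def SmmEst {T : ℕ} (n p : ℕ) (Sig : Matrix (Fin p) (Fin p) ℝ)
    (X : Matrix (Fin n) (Fin p) ℝ) (Y : Matrix (Fin n) (Fin T) ℝ) :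
    Matrix (Fin T) (Fin T) ℝ :=
  (((n : ℝ) + 1 + (p : ℝ)) / ((n : ℝ) * ((n : ℝ) + 1))) • (Yᵀ * Y)
    - (1 / ((n : ℝ) * ((n : ℝ) + 1))) • (Yᵀ * X * Sig⁻¹ * Xᵀ * Y)


section Hlp13

variable {a b c : Type*} [Fintype a] [Fintype b] [Fintype c]

/-- vector norm -/
def vnorm (f : a → ℝ) : ℝ := Real.sqrt (∑ i, f i ^ 2)

lemma vnorm_nonneg (f : a → ℝ) : 0 ≤ vnorm f := Real.sqrt_nonneg _

lemma sq_sum_nonneg (f : a → ℝ) : 0 ≤ ∑ i, f i ^ 2 :=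
  Finset.sum_nonneg fun _ _ => sq_nonneg _

lemma vnorm_sq (f : a → ℝ) : vnorm f ^ 2 = ∑ i, f i ^ 2 :=
  Real.sq_sqrt (sq_sum_nonneg f)

lemma le_of_sq_le_sq {x y : ℝ} (hy : 0 ≤ y) (h : x ^ 2 ≤ y ^ 2) (hx : 0 ≤ x) : x ≤ y := by
  nlinarith [sq_nonneg (x - y), sq_nonneg (x + y)]

lemma sum_mul_le_vnorm (f g : a → ℝ) : ∑ i, f i * g i ≤ vnorm f * vnorm g := by
  have h := Finset.sum_mul_sq_le_sq_mul_sq Finset.univ f g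
  have h2 : (vnorm f * vnorm g) ^ 2 = (∑ i, f i ^ 2) * ∑ i, g i ^ 2 := by
    rw [mul_pow, vnorm_sq, vnorm_sq]
  rcases le_or_gt (∑ i, f i * g i) 0 with h0 | h0
  · exact h0.trans (mul_nonneg (vnorm_nonneg f) (vnorm_nonneg g))
  · exact le_of_sq_le_sq (mul_nonneg (vnorm_nonneg f) (vnorm_nonneg g)) (h2 ▸ h) h0.le

lemma vnorm_add_le (f g : a → ℝ) : vnorm (f + g) ≤ vnorm f + vnorm g := by
  have hcs := sum_mul_le_vnorm f g
  refine le_of_sq_le_sq (add_nonneg (vnorm_nonneg f) (vnorm_nonneg g)) ?_ (vnorm_nonneg _)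
  rw [vnorm_sq]
  have : ∀ i, (f + g) i ^ 2 = f i ^ 2 + 2 * (f i * g i) + g i ^ 2 := by
    intro i; simp [Pi.add_apply]; ring
  simp only [this, Finset.sum_add_distrib, ← Finset.mul_sum]
  nlinarith [vnorm_sq f, vnorm_sq g, vnorm_nonneg f, vnorm_nonneg g]

lemma vnorm_smul (r : ℝ) (f : a → ℝ) : vnorm (fun i => r * f i) = |r| * vnorm f := by
  unfold vnorm
  rw [← Real.sqrt_sq_eq_abs, ← Real.sqrt_mul (sq_nonneg r)]
  congr 1
  rw [Finset.mul_sum]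
  exact Finset.sum_congr rfl fun i _ => by ring

lemma frobSq_nonneg (A : Matrix a b ℝ) : 0 ≤ frobSq A :=
  Finset.sum_nonneg fun _ _ => sq_sum_nonneg _

lemma frob_nonneg (A : Matrix a b ℝ) : 0 ≤ frob A := Real.sqrt_nonneg _

lemma frob_sq (A : Matrix a b ℝ) : frob A ^ 2 = frobSq A := Real.sq_sqrt (frobSq_nonneg A)

lemma frobSq_eq_prod (A : Matrix a b ℝ) : frobSq A = ∑ ij : a × b, A ij.1 ij.2 ^ 2 := by
  rw [frobSq, ← Finset.sum_product']; rfl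

lemma frob_eq_vnorm (A : Matrix a b ℝ) : frob A = vnorm (fun ij : a × b => A ij.1 ij.2) := by
  rw [frob, vnorm, frobSq_eq_prod]

/-- Frobenius inner product -/
def finner (A B : Matrix a b ℝ) : ℝ := ∑ i, ∑ j, A i j * B i j

lemma finner_eq_prod (A B : Matrix a b ℝ) :
    finner A B = ∑ ij : a × b, A ij.1 ij.2 * B ij.1 ij.2 := by
  rw [finner, ← Finset.sum_product']; rfl

lemma finner_le (A B : Matrix a b ℝ) : finner A B ≤ frob A * frob B := by
  rw [finner_eq_prod, frob_eq_vnorm, frob_eq_vnorm]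
  exact sum_mul_le_vnorm _ _

lemma finner_self (A : Matrix a b ℝ) : finner A A = frobSq A := by
  unfold finner frobSq; simp [sq]

lemma frob_add_le (A B : Matrix a b ℝ) : frob (A + B) ≤ frob A + frob B := by
  rw [frob_eq_vnorm, frob_eq_vnorm, frob_eq_vnorm]
  exact vnorm_add_le _ _

lemma frob_neg (A : Matrix a b ℝ) : frob (-A) = frob A := by
  unfold frob frobSq; simp

lemma frob_smul (r : ℝ) (A : Matrix a b ℝ) : frob (r • A) = |r| * frob A := by
  rw [frob_eq_vnorm, frob_eq_vnorm]
  have : (fun ij : a × b => (r • A) ij.1 ij.2) = fun ij : a × b => r * A ij.1 ij.2 := by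
    funext ij; simp [Matrix.smul_apply]
  rw [this, vnorm_smul]

lemma euclid_norm (x : b → ℝ) : ‖(WithLp.equiv 2 (b → ℝ)).symm x‖ = vnorm x := by
  rw [EuclideanSpace.norm_eq, vnorm]
  congr 1
  exact Finset.sum_congr rfl fun i _ => by
    show ‖x i‖ ^ 2 = x i ^ 2; rw [Real.norm_eq_abs, sq_abs]

variable [DecidableEq b] [DecidableEq a]

lemma opNorm_nonneg (A : Matrix a b ℝ) : 0 ≤ opNorm A := norm_nonneg _

lemma toEuclideanLin_equiv_symm' (A : Matrix a b ℝ) (x : b → ℝ) :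
    Matrix.toEuclideanLin A ((WithLp.equiv 2 (b → ℝ)).symm x)
      = (WithLp.equiv 2 (a → ℝ)).symm (A *ᵥ x) := rfl

lemma mulVec_vnorm_le (A : Matrix a b ℝ) (x : b → ℝ) :
    vnorm (A.mulVec x) ≤ opNorm A * vnorm x := by
  have h := (LinearMap.toContinuousLinearMap (Matrix.toEuclideanLin A)).le_opNorm
      ((WithLp.equiv 2 (b → ℝ)).symm x)
  rwa [LinearMap.coe_toContinuousLinearMap', toEuclideanLin_equiv_symm',
    euclid_norm, euclid_norm, ← opNorm] at h

lemma opNorm_le_bound {A : Matrix a b ℝ} {C : ℝ} (hC : 0 ≤ C)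
    (h : ∀ x : b → ℝ, vnorm (A.mulVec x) ≤ C * vnorm x) : opNorm A ≤ C := by
  refine ContinuousLinearMap.opNorm_le_bound _ hC fun x => ?_
  have := h ((WithLp.equiv 2 (b → ℝ)) x)
  have hx : (WithLp.equiv 2 (b → ℝ)).symm ((WithLp.equiv 2 (b → ℝ)) x) = x := by simp
  rw [← hx, euclid_norm, LinearMap.coe_toContinuousLinearMap',
    toEuclideanLin_equiv_symm', euclid_norm]
  exact this

lemma frob_mul_le (A : Matrix a b ℝ) (B : Matrix b c ℝ) :
    frob (A * B) ≤ opNorm A * frob B := by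
  refine le_of_sq_le_sq (mul_nonneg (opNorm_nonneg A) (frob_nonneg B)) ?_ (frob_nonneg _)
  rw [mul_pow, frob_sq, frob_sq]
  have hcol : ∀ t, ∑ i, (A * B) i t ^ 2 ≤ opNorm A ^ 2 * ∑ j, B j t ^ 2 := by
    intro t
    have h := mulVec_vnorm_le A (fun j => B j t)
    have h2 : vnorm (A.mulVec fun j => B j t) ^ 2 ≤ (opNorm A * vnorm fun j => B j t) ^ 2 := by
      have h0 := vnorm_nonneg (A.mulVec fun j => B j t)
      nlinarith
    rw [vnorm_sq, mul_pow, vnorm_sq] at h2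
    have he : ∀ i, (A * B) i t = A.mulVec (fun j => B j t) i := by
      intro i; rw [Matrix.mul_apply, Matrix.mulVec]; rfl
    simpa [he] using h2
  calc frobSq (A * B) = ∑ t, ∑ i, (A * B) i t ^ 2 := Finset.sum_comm
    _ ≤ ∑ t, opNorm A ^ 2 * ∑ j, B j t ^ 2 := Finset.sum_le_sum fun t _ => hcol t
    _ = opNorm A ^ 2 * frobSq B := by
        rw [← Finset.mul_sum, frobSq]; rw [Finset.sum_comm]

lemma opNorm_le_frob (A : Matrix a b ℝ) : opNorm A ≤ frob A := by
  refine opNorm_le_bound (frob_nonneg A) fun x => ?_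
  refine le_of_sq_le_sq (mul_nonneg (frob_nonneg A) (vnorm_nonneg x)) ?_ (vnorm_nonneg _)
  rw [vnorm_sq, mul_pow, frob_sq, vnorm_sq]
  have hrow : ∀ i, A.mulVec x i ^ 2 ≤ (∑ j, A i j ^ 2) * ∑ j, x j ^ 2 := by
    intro i
    have := Finset.sum_mul_sq_le_sq_mul_sq Finset.univ (A i) x
    simpa [Matrix.mulVec, dotProduct] using this
  calc ∑ i, A.mulVec x i ^ 2 ≤ ∑ i, (∑ j, A i j ^ 2) * ∑ j, x j ^ 2 :=
        Finset.sum_le_sum fun i _ => hrow i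
    _ = frobSq A * ∑ j, x j ^ 2 := by rw [← Finset.sum_mul, frobSq]

lemma opNorm_transpose (A : Matrix a b ℝ) : opNorm Aᵀ ≤ opNorm A := by
  refine opNorm_le_bound (opNorm_nonneg A) fun x => ?_
  set v := Aᵀ.mulVec x with hv
  have hyj : ∀ j, v j = ∑ i, A i j * x i := by
    intro j
    simp [hv, Matrix.mulVec, dotProduct, Matrix.transpose_apply]
  have key2 : vnorm v ^ 2 = ∑ i, x i * A.mulVec v i := by
    rw [vnorm_sq]
    calc ∑ j, v j ^ 2 = ∑ j, ∑ i, A i j * x i * v j := by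
          refine Finset.sum_congr rfl fun j _ => ?_
          rw [sq]
          nth_rewrite 1 [hyj j]
          rw [Finset.sum_mul]
      _ = ∑ i, ∑ j, A i j * x i * v j := Finset.sum_comm
      _ = ∑ i, x i * A.mulVec v i := by
          refine Finset.sum_congr rfl fun i _ => ?_
          have : A.mulVec v i = ∑ j, A i j * v j := by
            simp [Matrix.mulVec, dotProduct]
          rw [this, Finset.mul_sum]
          exact Finset.sum_congr rfl fun j _ => by ring
  have hcs : ∑ i, x i * A.mulVec v i ≤ vnorm x * (opNorm A * vnorm v) :=
    (sum_mul_le_vnorm x (A.mulVec v)).trans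
      (mul_le_mul_of_nonneg_left (mulVec_vnorm_le A v) (vnorm_nonneg x))
  have hyn : vnorm v ^ 2 ≤ vnorm x * (opNorm A * vnorm v) := key2 ▸ hcs
  rcases eq_or_lt_of_le (vnorm_nonneg v) with h0 | h0
  · rw [← h0]; exact mul_nonneg (opNorm_nonneg A) (vnorm_nonneg x)
  · nlinarith [vnorm_nonneg x, opNorm_nonneg A]

lemma opNorm_add_le (A B : Matrix a b ℝ) : opNorm (A + B) ≤ opNorm A + opNorm B := by
  unfold opNorm
  rw [map_add, map_add]
  exact norm_add_le _ _

lemma opNorm_smul (r : ℝ) (A : Matrix a b ℝ) : opNorm (r • A) = |r| * opNorm A := by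
  unfold opNorm
  rw [_root_.map_smul, _root_.map_smul]
  rw [show |r| = ‖r‖ from (Real.norm_eq_abs r).symm]
  exact norm_smul r (LinearMap.toContinuousLinearMap (Matrix.toEuclideanLin A))

omit [DecidableEq a] [DecidableEq b]

lemma finner_add_left (A B C : Matrix a b ℝ) :
    finner (A + B) C = finner A C + finner B C := by
  unfold finner
  rw [← Finset.sum_add_distrib]
  refine Finset.sum_congr rfl fun i _ => ?_
  rw [← Finset.sum_add_distrib]
  exact Finset.sum_congr rfl fun j _ => by simp [Matrix.add_apply]; ring

lemma finner_neg_left (A C : Matrix a b ℝ) : finner (-A) C = - finner A C := by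
  unfold finner
  rw [← Finset.sum_neg_distrib]
  refine Finset.sum_congr rfl fun i _ => ?_
  rw [← Finset.sum_neg_distrib]
  exact Finset.sum_congr rfl fun j _ => by simp

lemma finner_sub_left (A B C : Matrix a b ℝ) :
    finner (A - B) C = finner A C - finner B C := by
  rw [sub_eq_add_neg, finner_add_left, finner_neg_left]; ring

lemma finner_comm (A B : Matrix a b ℝ) : finner A B = finner B A := by
  unfold finner
  exact Finset.sum_congr rfl fun i _ => Finset.sum_congr rfl fun j _ => mul_comm _ _

lemma finner_sub_right (A B C : Matrix a b ℝ) :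
    finner A (B - C) = finner A B - finner A C := by
  rw [finner_comm, finner_sub_left, finner_comm B A, finner_comm C A]

lemma finner_neg_right (A C : Matrix a b ℝ) : finner A (-C) = - finner A C := by
  rw [finner_comm, finner_neg_left, finner_comm]

lemma neg_frob_le_finner (A B : Matrix a b ℝ) : -(frob A * frob B) ≤ finner A B := by
  have := finner_le (-A) B
  rw [finner_neg_left, frob_neg] at this
  linarith

lemma frobSq_add_smul (A B : Matrix a b ℝ) (t : ℝ) :
    frobSq (A + t • B) = frobSq A + 2 * t * finner A B + t ^ 2 * frobSq B := by
  unfold frobSq finner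
  have he : ∀ i j, (A + t • B) i j ^ 2
      = A i j ^ 2 + 2 * t * (A i j * B i j) + t ^ 2 * B i j ^ 2 := by
    intro i j; simp [Matrix.add_apply, Matrix.smul_apply, smul_eq_mul]; ring
  simp only [he, Finset.sum_add_distrib, ← Finset.mul_sum]

/-- limit lemma -/
lemma nonneg_of_forall_add (A C : ℝ) (hC : 0 ≤ C)
    (h : ∀ t : ℝ, 0 < t → t ≤ 1 → 0 ≤ A + t * C) : 0 ≤ A := by
  by_contra hA
  push_neg at hA
  have ht0 : (0:ℝ) < min 1 (-A / (2 * C + 1)) := by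
    apply lt_min one_pos
    apply div_pos (by linarith) (by linarith)
  have := h _ ht0 (min_le_left _ _)
  have h2 : min 1 (-A / (2 * C + 1)) * C ≤ (-A / (2 * C + 1)) * C :=
    mul_le_mul_of_nonneg_right (min_le_right _ _) hC
  have h3 : (-A / (2 * C + 1)) * C < -A := by
    rw [div_mul_eq_mul_div, div_lt_iff₀ (by linarith)]
    nlinarith
  linarith

/-- convexity of a row norm -/
lemma vnorm_convex (x y : a → ℝ) (t : ℝ) (ht0 : 0 ≤ t) (ht1 : t ≤ 1) :
    vnorm (fun i => x i + t * (y i - x i)) ≤ (1 - t) * vnorm x + t * vnorm y := by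
  have he : (fun i => x i + t * (y i - x i))
      = (fun i => (1 - t) * x i) + fun i => t * y i := by
    funext i; simp [Pi.add_apply]; ring
  rw [he]
  refine (vnorm_add_le _ _).trans ?_
  rw [vnorm_smul, vnorm_smul, abs_of_nonneg ht0, abs_of_nonneg (by linarith : (0:ℝ) ≤ 1 - t)]

lemma norm21_eq_sum_vnorm {p T : ℕ} (B : Matrix (Fin p) (Fin T) ℝ) :
    norm21 B = ∑ j, vnorm (B j) := rfl

lemma norm21_convex {p T : ℕ} (B1 B2 : Matrix (Fin p) (Fin T) ℝ) (t : ℝ)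
    (ht0 : 0 ≤ t) (ht1 : t ≤ 1) :
    norm21 (B1 + t • (B2 - B1)) ≤ (1 - t) * norm21 B1 + t * norm21 B2 := by
  rw [norm21_eq_sum_vnorm, norm21_eq_sum_vnorm, norm21_eq_sum_vnorm,
    Finset.mul_sum, Finset.mul_sum, ← Finset.sum_add_distrib]
  refine Finset.sum_le_sum fun j _ => ?_
  have he : (B1 + t • (B2 - B1)) j = fun i => B1 j i + t * (B2 j i - B1 j i) := by
    funext i; simp [Matrix.add_apply, Matrix.smul_apply, Matrix.sub_apply]
  rw [he]
  exact vnorm_convex _ _ t ht0 ht1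

/-- first-order optimality condition -/
lemma opt_ineq {n p T : ℕ} (hn : 0 < n) (lam : ℝ) (hlam : 0 ≤ lam)
    (Y : Matrix (Fin n) (Fin T) ℝ) (X : Matrix (Fin n) (Fin p) ℝ)
    (B1 B2 : Matrix (Fin p) (Fin T) ℝ)
    (hmin : ∀ B, objective n lam 0 Y X B1 ≤ objective n lam 0 Y X B) :
    0 ≤ finner (Y - X * B1) (X * (B1 - B2))
      + lam * (n : ℝ) * (norm21 B2 - norm21 B1) := by
  have hnR : (0:ℝ) < (n:ℝ) := Nat.cast_pos.mpr hn
  refine nonneg_of_forall_add _ (frobSq (X * (B1 - B2)) / 2)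
    (div_nonneg (frobSq_nonneg _) (by norm_num)) fun t ht0 ht1 => ?_
  have hobj := hmin (B1 + t • (B2 - B1))
  have hYX : Y - X * (B1 + t • (B2 - B1))
      = (Y - X * B1) + t • (X * (B1 - B2)) := by
    rw [Matrix.mul_add, Matrix.mul_smul, Matrix.mul_sub, Matrix.mul_sub]
    module
  rw [objective, objective, hYX, frobSq_add_smul] at hobj
  have hcon := norm21_convex B1 B2 t ht0.le ht1
  have hkey : 0 ≤ (1 / (2 * (n:ℝ)))
        * (2 * t * finner (Y - X * B1) (X * (B1 - B2))
          + t ^ 2 * frobSq (X * (B1 - B2)))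
      + lam * (t * (norm21 B2 - norm21 B1)) := by
    have hlam' : lam * norm21 (B1 + t • (B2 - B1))
        ≤ lam * ((1 - t) * norm21 B1 + t * norm21 B2) :=
      mul_le_mul_of_nonneg_left hcon hlam
    nlinarith [hobj, hlam']
  have hmul := mul_le_mul_of_nonneg_left hkey
    (by positivity : (0:ℝ) ≤ (2 * (n:ℝ)) / t)
  have heq : (2 * (n:ℝ)) / t * ((1 / (2 * (n:ℝ)))
        * (2 * t * finner (Y - X * B1) (X * (B1 - B2))
          + t ^ 2 * frobSq (X * (B1 - B2)))
      + lam * (t * (norm21 B2 - norm21 B1)))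
      = 2 * finner (Y - X * B1) (X * (B1 - B2)) + t * frobSq (X * (B1 - B2))
        + 2 * lam * (n:ℝ) * (norm21 B2 - norm21 B1) := by
    have htne : t ≠ 0 := ne_of_gt ht0
    have hnne : (n:ℝ) ≠ 0 := ne_of_gt hnR
    field_simp
  rw [mul_zero, heq] at hmul
  linarith

lemma two_norm_triangle (a1 g1 a2 g2 vv ww : ℝ) (ha1 : 0 ≤ a1) (hg1 : 0 ≤ g1)
    (ha2 : 0 ≤ a2) (hg2 : 0 ≤ g2) (hvv : 0 ≤ vv) (hww : 0 ≤ ww)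
    (hh : a1 ≤ a2 + vv) (hg : g1 ≤ g2 + ww) :
    Real.sqrt (a1 ^ 2 + g1 ^ 2) ≤ Real.sqrt (a2 ^ 2 + g2 ^ 2) + vv + ww := by
  set D2 := Real.sqrt (a2 ^ 2 + g2 ^ 2) with hD2
  have hD2n : 0 ≤ D2 := Real.sqrt_nonneg _
  have hD2sq : D2 ^ 2 = a2 ^ 2 + g2 ^ 2 := Real.sq_sqrt (by positivity)
  have hh2 : a2 ≤ D2 := le_of_sq_le_sq hD2n (by nlinarith) ha2
  have hg2' : g2 ≤ D2 := le_of_sq_le_sq hD2n (by nlinarith) hg2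
  have key : a1 ^ 2 + g1 ^ 2 ≤ (D2 + vv + ww) ^ 2 := by
    nlinarith [mul_le_mul_of_nonneg_right hh2 hvv, mul_le_mul_of_nonneg_right hg2' hww,
      mul_nonneg hvv hww, sq_nonneg (a2 + vv), sq_nonneg (g2 + ww),
      mul_le_mul hh hh ha1 (by linarith), mul_le_mul hg hg hg1 (by linarith)]
  calc Real.sqrt (a1 ^ 2 + g1 ^ 2) ≤ Real.sqrt ((D2 + vv + ww) ^ 2) := Real.sqrt_le_sqrt key
    _ = D2 + vv + ww := Real.sqrt_sq (by positivity)

lemma const_bound (η s q : ℝ) (hη : 0 < η) (hs : 0 ≤ s) (hq : 0 ≤ q)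
    (hs2 : s ^ 2 = η⁻¹) (hq2 : q ^ 2 = 1 + η⁻¹) :
    2 + 2 * q + q * s ≤ 8 * max 1 (2 * η)⁻¹ := by
  have hq2' : q ^ 2 = 1 + s ^ 2 := by rw [hq2, hs2]
  have h2η : (2 * η)⁻¹ = s ^ 2 / 2 := by
    rw [hs2]; field_simp
  rcases le_total (s ^ 2) 2 with hcase | hcase
  · have hmax : (1:ℝ) ≤ max 1 (2 * η)⁻¹ := le_max_left _ _
    have hq3 : q ^ 2 ≤ 3 := by rw [hq2']; linarith
    have hqb : q ≤ 1.7321 := le_of_sq_le_sq (by norm_num) (by nlinarith) hq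
    have hsb : s ≤ 1.41422 := le_of_sq_le_sq (by norm_num) (by nlinarith) hs
    have hbound : 2 + 2 * q + q * s ≤ 8 := by nlinarith [mul_le_mul hqb hsb hs (by norm_num)]
    nlinarith
  · have hmax : s ^ 2 / 2 ≤ max 1 (2 * η)⁻¹ := h2η ▸ le_max_right _ _
    have hq15 : q ^ 2 ≤ (3 / 2) * s ^ 2 := by rw [hq2']; linarith
    have hqb : q ≤ 1.2248 * s := le_of_sq_le_sq (by positivity) (by nlinarith) hq
    have hsb : (1.414 : ℝ) ≤ s := by nlinarith
    have hbound : 2 + 2 * q + q * s ≤ 4 * s ^ 2 := by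
      nlinarith [mul_le_mul_of_nonneg_right hqb hs, sq_nonneg (s - 1.414)]
    nlinarith

end Hlp13

/-- column of a product -/
lemma col_mul {m p T : ℕ} (A : Matrix (Fin m) (Fin p) ℝ) (B : Matrix (Fin p) (Fin T) ℝ)
    (t : Fin T) (i : Fin m) : (A * B) i t = A.mulVec (fun j => B j t) i := by
  simp [Matrix.mul_apply, Matrix.mulVec, dotProduct]


set_option maxHeartbeats 1000000 in
/-- Lemma: Lipschitz properties for the multi-task group Lasso,
`τ = 0`, on the sparsity/restricted-eigenvalue events. -/
theorem statement_13 (n p T : ℕ) (hn : 0 < n)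
    (Sig : Matrix (Fin p) (Fin p) ℝ) (hSig : Sig.PosDef)
    (Bstar : Matrix (Fin p) (Fin T) ℝ) (E : Matrix (Fin n) (Fin T) ℝ)
    (lam : ℝ) (hlam : 0 ≤ lam) (c η : ℝ) (hc0 : 0 < c) (hc1 : c < 1) (hη : 0 < η)
    (Z Zb : Matrix (Fin n) (Fin p) ℝ) (B1 B2 : Matrix (Fin p) (Fin T) ℝ)
    (h1 : ∀ B, objective n lam 0 (Z * matSqrt Sig * Bstar + E) (Z * matSqrt Sig) B1
        ≤ objective n lam 0 (Z * matSqrt Sig * Bstar + E) (Z * matSqrt Sig) B)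
    (h2 : ∀ B, objective n lam 0 (Zb * matSqrt Sig * Bstar + E) (Zb * matSqrt Sig) B2
        ≤ objective n lam 0 (Zb * matSqrt Sig * Bstar + E) (Zb * matSqrt Sig) B)
    (hD1 : 0 < Dz Sig Bstar E Z B1) (hD2 : 0 < Dz Sig Bstar E Zb B2)
    (hsp1 : (nnzRows B1 : ℝ) ≤ (n : ℝ) * (1 - c) / 2)
    (hsp2 : (nnzRows B2 : ℝ) ≤ (n : ℝ) * (1 - c) / 2)
    (hre1 : ∀ b : Fin p → ℝ, b ≠ 0 → (nnzVec b : ℝ) ≤ (1 - c) * (n : ℝ) →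
        η * (n : ℝ) * (∑ i, ((matSqrt Sig).mulVec b i) ^ 2)
          < ∑ i, ((Z * matSqrt Sig).mulVec b i) ^ 2)
    (hre2 : ∀ b : Fin p → ℝ, b ≠ 0 → (nnzVec b : ℝ) ≤ (1 - c) * (n : ℝ) →
        η * (n : ℝ) * (∑ i, ((matSqrt Sig).mulVec b i) ^ 2)
          < ∑ i, ((Zb * matSqrt Sig).mulVec b i) ^ 2) :
    ((Real.sqrt (n : ℝ))⁻¹ *
        frob ((Dz Sig Bstar E Z B1)⁻¹ • Fz Sig Bstar E Z B1
          - (Dz Sig Bstar E Zb B2)⁻¹ • Fz Sig Bstar E Zb B2)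
      ≤ (Real.sqrt (n : ℝ))⁻¹ * (8 * max 1 (2 * η)⁻¹) * opNorm (Z - Zb)) ∧
    (opNorm Z < 2 * Real.sqrt (n : ℝ) + Real.sqrt (p : ℝ) →
      opNorm Zb < 2 * Real.sqrt (n : ℝ) + Real.sqrt (p : ℝ) →
      opNorm (((n : ℝ)⁻¹ * (Dz Sig Bstar E Z B1)⁻¹) • (Zᵀ * Fz Sig Bstar E Z B1)
          - ((n : ℝ)⁻¹ * (Dz Sig Bstar E Zb B2)⁻¹) • (Zbᵀ * Fz Sig Bstar E Zb B2))
        ≤ (Real.sqrt (n : ℝ))⁻¹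
            * (1 + (2 + Real.sqrt ((p : ℝ) / (n : ℝ))) * (8 * max 1 (2 * η)⁻¹))
            * opNorm (Z - Zb)) := by
  have hnR : (0:ℝ) < (n:ℝ) := Nat.cast_pos.mpr hn
  set S := matSqrt Sig with hSdef
  set F1 := Fz Sig Bstar E Z B1 with hF1def
  set F2 := Fz Sig Bstar E Zb B2 with hF2def
  set D1 := Dz Sig Bstar E Z B1 with hD1def
  set D2 := Dz Sig Bstar E Zb B2 with hD2def
  set H1 := herr Sig Bstar B1 with hH1def
  set H2 := herr Sig Bstar B2 with hH2def
  have hF1eq : F1 = Z * S * Bstar + E - Z * S * B1 := rfl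
  have hF2eq : F2 = Zb * S * Bstar + E - Zb * S * B2 := rfl
  have hH1eq : H1 = S * (B1 - Bstar) := rfl
  have hH2eq : H2 = S * (B2 - Bstar) := rfl
  -- real quantities
  set eps := opNorm (Z - Zb) with hepsdef
  have heps : 0 ≤ eps := opNorm_nonneg _
  set rn := Real.sqrt (n:ℝ) with hrndef
  have hrn : 0 < rn := Real.sqrt_pos.mpr hnR
  have hrn2 : rn ^ 2 = (n:ℝ) := Real.sq_sqrt hnR.le
  set s := Real.sqrt η⁻¹ with hsdef
  have hs : 0 ≤ s := Real.sqrt_nonneg _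
  have hs2 : s ^ 2 = η⁻¹ := Real.sq_sqrt (by positivity)
  set q := Real.sqrt (1 + η⁻¹) with hqdef
  have hq : 0 ≤ q := Real.sqrt_nonneg _
  have hq2 : q ^ 2 = 1 + η⁻¹ := Real.sq_sqrt (by positivity)
  have hq2' : q ^ 2 = 1 + s ^ 2 := by rw [hq2, hs2]
  set u := frob (Zb * S * (B1 - B2)) with hudef
  set v := frob (S * (B1 - B2)) with hvdef
  set w := frob (F1 - F2) with hwdef
  set a1 := frob H1 with ha1def
  set f1 := frob F1 with hf1def
  set a2 := frob H2 with ha2def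
  set f2 := frob F2 with hf2def
  have hu0 : 0 ≤ u := frob_nonneg _
  have hv0 : 0 ≤ v := frob_nonneg _
  have hw0 : 0 ≤ w := frob_nonneg _
  have ha10 : 0 ≤ a1 := frob_nonneg _
  have hf10 : 0 ≤ f1 := frob_nonneg _
  have ha20 : 0 ≤ a2 := frob_nonneg _
  have hf20 : 0 ≤ f2 := frob_nonneg _
  have hD1sq : D1 ^ 2 = a1 ^ 2 + f1 ^ 2 / (n:ℝ) := by
    rw [hD1def, Dz]
    exact Real.sq_sqrt (by positivity)
  have hD2sq : D2 ^ 2 = a2 ^ 2 + f2 ^ 2 / (n:ℝ) := by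
    rw [hD2def, Dz]
    exact Real.sq_sqrt (by positivity)
  -- matrix identities
  have idH : H1 - H2 = S * (B1 - B2) := by
    rw [hH1eq, hH2eq, Matrix.mul_sub, Matrix.mul_sub, Matrix.mul_sub]
    abel
  have idF : F1 - F2 = -(Zb * S * (B1 - B2)) - (Z - Zb) * H1 := by
    rw [hF1eq, hF2eq, hH1eq]
    simp only [Matrix.mul_sub, Matrix.sub_mul, Matrix.mul_assoc]
    abel
  have idM : Z * S * (B1 - B2) - Zb * S * (B1 - B2) = (Z - Zb) * (S * (B1 - B2)) := by
    simp only [Matrix.mul_sub, Matrix.sub_mul, Matrix.mul_assoc]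
    abel
  -- optimality / monotonicity
  have key1 := opt_ineq hn lam hlam (Z * S * Bstar + E) (Z * S) B1 B2 h1
  have key2 := opt_ineq hn lam hlam (Zb * S * Bstar + E) (Zb * S) B2 B1 h2
  have hswap : Zb * S * (B2 - B1) = -(Zb * S * (B1 - B2)) := by
    rw [← neg_sub B1 B2, Matrix.mul_neg]
  rw [hswap, finner_neg_right] at key2
  have mono : finner F2 (Zb * S * (B1 - B2)) ≤ finner F1 (Z * S * (B1 - B2)) := by
    rw [hF1eq, hF2eq]; linarith only [key1, key2]
  -- core quadratic inequality
  have I2 : u ^ 2 ≤ eps * f1 * v + eps * a1 * u := by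
    have hF2split : F2 = F1 + (Zb * S * (B1 - B2) + (Z - Zb) * H1) := by
      have h3 : F2 = F1 - (F1 - F2) := by abel
      rw [h3, idF]
      abel
    have e1 : finner F2 (Zb * S * (B1 - B2))
        = finner F1 (Zb * S * (B1 - B2)) + frobSq (Zb * S * (B1 - B2))
          + finner ((Z - Zb) * H1) (Zb * S * (B1 - B2)) := by
      rw [hF2split, finner_add_left, finner_add_left, finner_self]
      ring
    have e2 : finner F1 (Z * S * (B1 - B2)) - finner F1 (Zb * S * (B1 - B2))
        = finner F1 ((Z - Zb) * (S * (B1 - B2))) := by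
      rw [← finner_sub_right, idM]
    have b1 : finner F1 ((Z - Zb) * (S * (B1 - B2))) ≤ f1 * (eps * v) := by
      refine (finner_le _ _).trans ?_
      exact mul_le_mul_of_nonneg_left (frob_mul_le _ _) hf10
    have b2 : -(eps * a1) * u ≤ finner ((Z - Zb) * H1) (Zb * S * (B1 - B2)) := by
      refine le_trans ?_ (neg_frob_le_finner _ _)
      have hNb : frob ((Z - Zb) * H1) ≤ eps * a1 := frob_mul_le _ _
      have h5 := mul_le_mul_of_nonneg_right hNb hu0
      nlinarith only [h5, hu0, frob_nonneg ((Z - Zb) * H1), neg_frob_le_finner ((Z - Zb) * H1) (Zb * S * (B1 - B2))]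
    have husq : u ^ 2 = frobSq (Zb * S * (B1 - B2)) := frob_sq _
    linarith only [mono, e1, e2, b1, b2, husq]
  -- restricted eigenvalue
  have I4 : η * (n:ℝ) * v ^ 2 ≤ u ^ 2 := by
    have hcolsum : ∀ t : Fin T,
        η * (n:ℝ) * (∑ j, ((S * (B1 - B2)) j t) ^ 2)
          ≤ ∑ i, ((Zb * S * (B1 - B2)) i t) ^ 2 := by
      intro t
      by_cases hbt : (fun j => (B1 - B2) j t) = 0
      · have hz1 : ∀ j, (S * (B1 - B2)) j t = 0 := by
          intro j; rw [col_mul, hbt, Matrix.mulVec_zero]; rfl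
        have hz2 : ∀ i, (Zb * S * (B1 - B2)) i t = 0 := by
          intro i
          rw [Matrix.mul_assoc, col_mul]
          have : (fun j => (S * (B1 - B2)) j t) = 0 := funext hz1
          rw [this, Matrix.mulVec_zero]; rfl
        simp [hz1, hz2]
      · have hcard : (nnzVec (fun j => (B1 - B2) j t) : ℝ) ≤ (1 - c) * (n:ℝ) := by
          have hsub : nnzVec (fun j => (B1 - B2) j t) ≤ nnzRows B1 + nnzRows B2 := by
            classical
            unfold nnzVec nnzRows
            refine le_trans (Finset.card_le_card ?_) (Finset.card_union_le _ _)
            intro j hj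
            simp only [Finset.mem_filter, Finset.mem_union, Finset.mem_univ, true_and] at *
            by_contra hcon
            push_neg at hcon
            obtain ⟨hB1, hB2⟩ := hcon
            apply hj
            have e1 : B1 j t = 0 := by rw [hB1]; rfl
            have e2 : B2 j t = 0 := by rw [hB2]; rfl
            simp [Matrix.sub_apply, e1, e2]
          calc (nnzVec (fun j => (B1 - B2) j t) : ℝ)
              ≤ (nnzRows B1 : ℝ) + (nnzRows B2 : ℝ) := by exact_mod_cast hsub
            _ ≤ (n:ℝ) * (1 - c) / 2 + (n:ℝ) * (1 - c) / 2 := add_le_add hsp1 hsp2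
            _ = (1 - c) * (n:ℝ) := by ring
        have hre := (hre2 _ hbt hcard).le
        have eS : ∑ j, ((S * (B1 - B2)) j t) ^ 2
            = ∑ i, (S.mulVec (fun j => (B1 - B2) j t) i) ^ 2 :=
          Finset.sum_congr rfl fun j _ => by rw [col_mul]
        have eX : ∑ i, ((Zb * S * (B1 - B2)) i t) ^ 2
            = ∑ i, ((Zb * S).mulVec (fun j => (B1 - B2) j t) i) ^ 2 :=
          Finset.sum_congr rfl fun i _ => by rw [col_mul]
        rw [eS, eX]
        exact hre
    have eV : v ^ 2 = ∑ t, ∑ j, ((S * (B1 - B2)) j t) ^ 2 := by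
      rw [hvdef, frob_sq, frobSq, Finset.sum_comm]
    have eU : u ^ 2 = ∑ t, ∑ i, ((Zb * S * (B1 - B2)) i t) ^ 2 := by
      rw [hudef, frob_sq, frobSq, Finset.sum_comm]
    rw [eV, eU, Finset.mul_sum]
    exact Finset.sum_le_sum fun t _ => hcolsum t
  -- basic comparisons
  have hfr1 : (f1 / rn) ^ 2 = f1 ^ 2 / (n:ℝ) := by rw [div_pow, hrn2]
  have hfr2 : (f2 / rn) ^ 2 = f2 ^ 2 / (n:ℝ) := by rw [div_pow, hrn2]
  have ha1D : a1 ≤ D1 := by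
    refine le_of_sq_le_sq hD1.le ?_ ha10
    have h9 : (0:ℝ) ≤ f1 ^ 2 / (n:ℝ) := by positivity
    linarith only [hD1sq, h9]
  have hf1D : f1 ≤ rn * D1 := by
    refine le_of_sq_le_sq (mul_nonneg hrn.le hD1.le) ?_ hf10
    have e : (rn * D1) ^ 2 = (n:ℝ) * a1 ^ 2 + f1 ^ 2 := by
      rw [mul_pow, hrn2, hD1sq]
      field_simp
    nlinarith only [e, sq_nonneg a1, hnR]
  have hf2D : f2 ≤ rn * D2 := by
    refine le_of_sq_le_sq (mul_nonneg hrn.le hD2.le) ?_ hf20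
    have e : (rn * D2) ^ 2 = (n:ℝ) * a2 ^ 2 + f2 ^ 2 := by
      rw [mul_pow, hrn2, hD2sq]
      field_simp
    nlinarith only [e, sq_nonneg a2, hnR]
  have hvu : rn * v ≤ s * u := by
    refine le_of_sq_le_sq (mul_nonneg hs hu0) ?_ (mul_nonneg hrn.le hv0)
    have h6 : (n:ℝ) * v ^ 2 ≤ η⁻¹ * u ^ 2 := by
      have h7 := mul_le_mul_of_nonneg_left I4 (inv_pos.mpr hη).le
      have e : η⁻¹ * (η * (n:ℝ) * v ^ 2) = (n:ℝ) * v ^ 2 := by field_simp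
      have h7' := e ▸ h7
      linarith only [h7']
    rw [mul_pow, mul_pow, hrn2, hs2]
    exact h6
  have hcs : a1 + s * (f1 / rn) ≤ q * D1 := by
    refine le_of_sq_le_sq (mul_nonneg hq hD1.le) ?_ (by positivity)
    rw [mul_pow, hq2', hD1sq]
    nlinarith only [sq_nonneg (s * a1 - f1 / rn), hfr1]
  have hu1 : u ≤ eps * (q * D1) := by
    rcases eq_or_lt_of_le hu0 with hu' | hup
    · rw [← hu']; positivity
    · have hvle : v ≤ s * u / rn := (le_div_iff₀ hrn).mpr (by linarith [hvu])
      have c1 : eps * f1 * v ≤ eps * f1 * (s * u / rn) :=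
        mul_le_mul_of_nonneg_left hvle (by positivity)
      have c2 : eps * f1 * (s * u / rn) + eps * a1 * u = eps * u * (a1 + s * (f1 / rn)) := by
        field_simp; ring
      have c3 : eps * u * (a1 + s * (f1 / rn)) ≤ eps * u * (q * D1) :=
        mul_le_mul_of_nonneg_left hcs (by positivity)
      nlinarith only [I2, c1, c2, c3, hup]
  have hw1 : w ≤ eps * (q * D1) + eps * D1 := by
    have e : -(Zb * S * (B1 - B2)) - (Z - Zb) * H1
        = -((Zb * S * (B1 - B2)) + (Z - Zb) * H1) := by abel
    have hwb : w ≤ u + eps * a1 := by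
      rw [hwdef, idF, e, frob_neg]
      refine (frob_add_le _ _).trans ?_
      have h11 := frob_mul_le (Z - Zb) H1
      rw [← ha1def] at h11
      rw [← hudef]
      linarith only [h11]
    have h12 : eps * a1 ≤ eps * D1 := mul_le_mul_of_nonneg_left ha1D heps
    linarith only [hwb, h12, hu1]
  -- distance between D1 and D2
  have hD1' : D1 = Real.sqrt (a1 ^ 2 + (f1 / rn) ^ 2) := by rw [hD1def, Dz, ← hfr1]
  have hD2' : D2 = Real.sqrt (a2 ^ 2 + (f2 / rn) ^ 2) := by rw [hD2def, Dz, ← hfr2]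
  have ha12 : a1 ≤ a2 + v := by
    have e : H1 = H2 + S * (B1 - B2) := by rw [← idH]; abel
    calc a1 = frob H1 := rfl
      _ = frob (H2 + S * (B1 - B2)) := by rw [← e]
      _ ≤ a2 + v := frob_add_le _ _
  have ha21 : a2 ≤ a1 + v := by
    have e : H2 = H1 + -(S * (B1 - B2)) := by rw [← idH]; abel
    calc a2 = frob H2 := rfl
      _ = frob (H1 + -(S * (B1 - B2))) := by rw [← e]
      _ ≤ a1 + frob (-(S * (B1 - B2))) := frob_add_le _ _
      _ = a1 + v := by rw [frob_neg]
  have hf12 : f1 ≤ f2 + w := by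
    have e : F1 = F2 + (F1 - F2) := by abel
    calc f1 = frob F1 := rfl
      _ = frob (F2 + (F1 - F2)) := by rw [← e]
      _ ≤ f2 + w := frob_add_le _ _
  have hf21 : f2 ≤ f1 + w := by
    have e : F2 = F1 + -(F1 - F2) := by abel
    calc f2 = frob F2 := rfl
      _ = frob (F1 + -(F1 - F2)) := by rw [← e]
      _ ≤ f1 + frob (-(F1 - F2)) := frob_add_le _ _
      _ = f1 + w := by rw [frob_neg]
  have hfd12 : f1 / rn ≤ f2 / rn + w / rn := by
    rw [← add_div]
    gcongr
  have hfd21 : f2 / rn ≤ f1 / rn + w / rn := by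
    rw [← add_div]
    gcongr
  have hd : |D2 - D1| ≤ v + w / rn := by
    rw [abs_sub_le_iff]
    constructor
    · have := two_norm_triangle a2 (f2 / rn) a1 (f1 / rn) v (w / rn)
        ha20 (by positivity) ha10 (by positivity) hv0 (by positivity) ha21 hfd21
      rw [← hD1', ← hD2'] at this
      linarith only [this]
    · have := two_norm_triangle a1 (f1 / rn) a2 (f2 / rn) v (w / rn)
        ha10 (by positivity) ha20 (by positivity) hv0 (by positivity) ha12 hfd12
      rw [← hD1', ← hD2'] at this
      linarith only [this]
  clear_value S F1 F2 D1 D2 H1 H2 eps rn s q u v w a1 f1 a2 f2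
  -- Part 1 bound
  set L := 8 * max 1 (2 * η)⁻¹ with hLdef
  clear_value L
  have hL : 2 + 2 * q + q * s ≤ L := by
    rw [hLdef]; exact const_bound η s q hη hs hq hs2 hq2
  have hLpos : (0:ℝ) ≤ L := le_trans (by nlinarith only [hq, hs, mul_nonneg hq hs]) hL
  have hrv : rn * v ≤ s * (eps * (q * D1)) := hvu.trans (mul_le_mul_of_nonneg_left hu1 hs)
  have hnum : 2 * w + rn * v ≤ eps * (2 + 2 * q + q * s) * D1 := by nlinarith only [hw1, hrv]
  have hT : frob (D1⁻¹ • F1 - D2⁻¹ • F2) ≤ L * eps := by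
    have hsplit : D1⁻¹ • F1 - D2⁻¹ • F2 = D1⁻¹ • (F1 - F2) + (D1⁻¹ - D2⁻¹) • F2 := by
      module
    have habs : |D1⁻¹ - D2⁻¹| * f2 ≤ (rn * v + w) / D1 := by
      have e : D1⁻¹ - D2⁻¹ = (D2 - D1) / (D1 * D2) := by field_simp
      rw [e, abs_div, abs_of_pos (mul_pos hD1 hD2), div_mul_eq_mul_div,
        div_le_div_iff₀ (mul_pos hD1 hD2) hD1]
      have h8 : |D2 - D1| * f2 ≤ (v + w / rn) * (rn * D2) :=
        mul_le_mul hd hf2D hf20 (by positivity)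
      have e2 : (v + w / rn) * (rn * D2) * D1 = (rn * v + w) * (D1 * D2) := by
        field_simp
      calc |D2 - D1| * f2 * D1 ≤ (v + w / rn) * (rn * D2) * D1 :=
            mul_le_mul_of_nonneg_right h8 hD1.le
        _ = (rn * v + w) * (D1 * D2) := e2
    calc frob (D1⁻¹ • F1 - D2⁻¹ • F2)
        = frob (D1⁻¹ • (F1 - F2) + (D1⁻¹ - D2⁻¹) • F2) := by rw [hsplit]
      _ ≤ frob (D1⁻¹ • (F1 - F2)) + frob ((D1⁻¹ - D2⁻¹) • F2) := frob_add_le _ _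
      _ = D1⁻¹ * w + |D1⁻¹ - D2⁻¹| * f2 := by
          rw [frob_smul, frob_smul, abs_of_nonneg (inv_nonneg.mpr hD1.le), ← hwdef, ← hf2def]
      _ ≤ D1⁻¹ * w + (rn * v + w) / D1 := by linarith only [habs]
      _ = (2 * w + rn * v) / D1 := by field_simp; ring
      _ ≤ eps * (2 + 2 * q + q * s) := by rw [div_le_iff₀ hD1]; exact hnum
      _ ≤ L * eps := by nlinarith only [hL, heps, hq, hs]
  constructor
  · calc rn⁻¹ * frob (D1⁻¹ • F1 - D2⁻¹ • F2) ≤ rn⁻¹ * (L * eps) :=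
        mul_le_mul_of_nonneg_left hT (by positivity)
      _ = rn⁻¹ * L * eps := by ring
  · intro hZ hZb
    have hQsplit : ((n:ℝ)⁻¹ * D1⁻¹) • (Zᵀ * F1) - ((n:ℝ)⁻¹ * D2⁻¹) • (Zbᵀ * F2)
        = (n:ℝ)⁻¹ • (Zᵀ * (D1⁻¹ • F1 - D2⁻¹ • F2))
          + ((n:ℝ)⁻¹ * D2⁻¹) • ((Z - Zb)ᵀ * F2) := by
      rw [Matrix.mul_sub, Matrix.mul_smul, Matrix.mul_smul, Matrix.transpose_sub,
        Matrix.sub_mul]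
      module
    have hop1 : opNorm ((n:ℝ)⁻¹ • (Zᵀ * (D1⁻¹ • F1 - D2⁻¹ • F2)))
        ≤ (n:ℝ)⁻¹ * ((2 * rn + Real.sqrt p) * (L * eps)) := by
      rw [opNorm_smul, abs_of_nonneg (by positivity : (0:ℝ) ≤ (n:ℝ)⁻¹)]
      refine mul_le_mul_of_nonneg_left ?_ (by positivity)
      calc opNorm (Zᵀ * (D1⁻¹ • F1 - D2⁻¹ • F2))
          ≤ frob (Zᵀ * (D1⁻¹ • F1 - D2⁻¹ • F2)) := opNorm_le_frob _
        _ ≤ opNorm Zᵀ * frob (D1⁻¹ • F1 - D2⁻¹ • F2) := frob_mul_le _ _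
        _ ≤ (2 * rn + Real.sqrt p) * (L * eps) :=
            mul_le_mul ((opNorm_transpose Z).trans hZ.le) hT (frob_nonneg _)
              (by positivity)
    have hop2 : opNorm (((n:ℝ)⁻¹ * D2⁻¹) • ((Z - Zb)ᵀ * F2))
        ≤ ((n:ℝ)⁻¹ * D2⁻¹) * (eps * (rn * D2)) := by
      rw [opNorm_smul, abs_of_nonneg (by positivity : (0:ℝ) ≤ (n:ℝ)⁻¹ * D2⁻¹)]
      refine mul_le_mul_of_nonneg_left ?_ (by positivity)
      calc opNorm ((Z - Zb)ᵀ * F2) ≤ frob ((Z - Zb)ᵀ * F2) := opNorm_le_frob _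
        _ ≤ opNorm (Z - Zb)ᵀ * f2 := by
            have h10 := frob_mul_le (Z - Zb)ᵀ F2
            rw [← hf2def] at h10
            exact h10
        _ ≤ eps * (rn * D2) :=
            mul_le_mul (hepsdef ▸ opNorm_transpose (Z - Zb)) hf2D hf20 heps
    have hpq : Real.sqrt ((p:ℝ) / (n:ℝ)) = Real.sqrt (p:ℝ) / rn := by
      rw [Real.sqrt_div (by positivity) (n:ℝ), ← hrndef]
    have efin : (n:ℝ)⁻¹ * ((2 * rn + Real.sqrt p) * (L * eps))
        + ((n:ℝ)⁻¹ * D2⁻¹) * (eps * (rn * D2))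
        = rn⁻¹ * (1 + (2 + Real.sqrt (p:ℝ) / rn) * L) * eps := by
      rw [← hrn2]
      field_simp
      ring
    rw [hQsplit, hpq]
    calc opNorm ((n:ℝ)⁻¹ • (Zᵀ * (D1⁻¹ • F1 - D2⁻¹ • F2))
          + ((n:ℝ)⁻¹ * D2⁻¹) • ((Z - Zb)ᵀ * F2))
        ≤ opNorm ((n:ℝ)⁻¹ • (Zᵀ * (D1⁻¹ • F1 - D2⁻¹ • F2)))
          + opNorm (((n:ℝ)⁻¹ * D2⁻¹) • ((Z - Zb)ᵀ * F2)) := opNorm_add_le _ _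
      _ ≤ (n:ℝ)⁻¹ * ((2 * rn + Real.sqrt p) * (L * eps))
          + ((n:ℝ)⁻¹ * D2⁻¹) * (eps * (rn * D2)) := add_le_add hop1 hop2
      _ = rn⁻¹ * (1 + (2 + Real.sqrt (p:ℝ) / rn) * L) * eps := efin


end MTS
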